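/- Every red/blue coloring of the edges of the complete graph on 2^(2t−3) vertices (t ≥ 2) contains at least (1/t!)·2^(C(t,2) − 2) monochromatic cliques of size t. -/

import Mathlib

open Finset

namespace S10

/-! ### Generic list/finset helpers -/

section Generic

variable {α : Type*} [LinearOrder α]

/-- canonical subset of `s` of size `m` (the first `m` elements in sorted order) -/
def trunc (s : Finset α) (m : ℕ) : Finset α := ((s.sort (· ≤ ·)).take m).toFinset

lemma trunc_subset (s : Finset α) (m : ℕ) : trunc s m ⊆ s := by
  intro a ha
  rw [trunc, List.mem_toFinset] at ha
  exact (Finset.mem_sort _).1 ((List.take_sublist _ _).mem ha)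

lemma card_trunc (s : Finset α) (m : ℕ) (h : m ≤ s.card) : (trunc s m).card = m := by
  rw [trunc, List.toFinset_card_of_nodup ((Finset.sort_nodup s _).sublist (List.take_sublist _ _))]
  rw [List.length_take, Finset.length_sort]
  omega

/-- the `i`-th element of `s` in sorted order -/
def pick (s : Finset α) (d : α) (i : ℕ) : α := (s.sort (· ≤ ·)).getD i d

lemma pick_mem (s : Finset α) (d : α) (i : ℕ) (h : i < s.card) : pick s d i ∈ s := by
  rw [pick, List.getD_eq_getElem _ _ (by rwa [Finset.length_sort])]
  exact (Finset.mem_sort _).1 (List.getElem_mem _)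

lemma pick_inj (s : Finset α) (d : α) {i j : ℕ} (hi : i < s.card) (hj : j < s.card)
    (h : pick s d i = pick s d j) : i = j := by
  simp only [pick] at h
  rw [List.getD_eq_getElem _ _ (by rwa [Finset.length_sort]),
    List.getD_eq_getElem _ _ (by rwa [Finset.length_sort])] at h
  exact ((Finset.sort_nodup s _).getElem_inj_iff).1 h

end Generic

/-! ### Numeric lemmas -/

/-- sum over `r`-subsets `S` of `{1,…,N}` of `2^{Σ S}` -/
def F (N r : ℕ) : ℕ := ∑ S ∈ (Icc 1 N).powersetCard r, 2 ^ (∑ j ∈ S, j)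

/-- sum of the top `r` values `N, N-1, …, N-r+1` -/
def sig (N r : ℕ) : ℕ := ∑ i ∈ range r, (N - i)

def DD (r : ℕ) : ℕ := ∏ i ∈ Icc 1 r, (2 ^ i - 1)

def TT (r : ℕ) : ℕ := ∑ i ∈ Icc 1 r, i

lemma Icc_one_succ (r : ℕ) : Icc 1 (r + 1) = insert (r + 1) (Icc 1 r) := by
  ext a; simp [Finset.mem_Icc, Finset.mem_insert]; omega

lemma DD_succ (r : ℕ) : DD (r + 1) = (2 ^ (r + 1) - 1) * DD r := by
  rw [DD, DD, Icc_one_succ, Finset.prod_insert (by simp)]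

lemma TT_succ (r : ℕ) : TT (r + 1) = TT r + (r + 1) := by
  rw [TT, TT, Icc_one_succ, Finset.sum_insert (by simp)]; omega

lemma F_zero (N : ℕ) : F N 0 = 1 := by
  rw [F, Finset.powersetCard_zero, Finset.sum_singleton]
  simp

lemma F_gt {N r : ℕ} (h : N < r) : F N r = 0 := by
  rw [F, Finset.powersetCard_eq_empty.2 (by simpa using h), Finset.sum_empty]

lemma F_succ (N r : ℕ) : F (N + 1) (r + 1) = F N (r + 1) + 2 ^ (N + 1) * F N r := by
  have hnm : (N + 1) ∉ Icc 1 N := by simp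
  rw [F, Icc_one_succ, Finset.powersetCard_succ_insert hnm]
  rw [Finset.sum_union]
  · congr 1
    rw [Finset.sum_image]
    · rw [F, Finset.mul_sum]
      refine Finset.sum_congr rfl fun S hS => ?_
      have hS' : (N + 1) ∉ S := fun hc => hnm ((Finset.mem_powersetCard.1 hS).1 hc)
      rw [Finset.sum_insert hS', pow_add]
    · intro S hS S' hS' h
      have h1 : (N + 1) ∉ S := fun hc => hnm ((Finset.mem_powersetCard.1 hS).1 hc)
      have h2 : (N + 1) ∉ S' := fun hc => hnm ((Finset.mem_powersetCard.1 hS').1 hc)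
      rw [← Finset.erase_insert h1, ← Finset.erase_insert h2, h]
  · rw [Finset.disjoint_left]
    intro S hS hS'
    rcases Finset.mem_image.1 hS' with ⟨S', _, rfl⟩
    exact (fun hc => hnm ((Finset.mem_powersetCard.1 hS).1 hc)) (Finset.mem_insert_self _ _)

lemma sig_zero (N : ℕ) : sig N 0 = 0 := by simp [sig]

lemma sig_succ_N {N r : ℕ} (h : r ≤ N) : sig (N + 1) (r + 1) = sig N (r + 1) + (r + 1) := by
  have hcong : ∀ i ∈ range (r + 1), N + 1 - i = (N - i) + 1 := by
    intro i hi
    have : i ≤ r := Nat.lt_succ_iff.1 (Finset.mem_range.1 hi)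
    omega
  rw [sig, sig, Finset.sum_congr rfl hcong, Finset.sum_add_distrib, Finset.sum_const,
    Finset.card_range, smul_eq_mul, mul_one]

lemma sig_shift (N r : ℕ) : sig (N + 1) (r + 1) = (N + 1) + sig N r := by
  rw [sig, Finset.sum_range_succ']
  simp only [Nat.succ_sub_succ, Nat.sub_zero]
  rw [sig]; omega

/-- key induction: `F N r * DD r ≤ 2^(sig N r + TT r)` -/
lemma FD : ∀ N r : ℕ, F N r * DD r ≤ 2 ^ (sig N r + TT r) := by
  intro N
  induction N with
  | zero =>
    intro r
    cases r with
    | zero => simp [F_zero, DD, TT, sig]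
    | succ r => rw [F_gt (by omega)]; simp
  | succ N ih =>
    intro r
    cases r with
    | zero => simp [F_zero, DD, TT, sig]
    | succ r =>
      rcases Nat.lt_or_ge (N + 1) (r + 1) with h | h
      · rw [F_gt h]; simp
      · have hrN : r ≤ N := by omega
        rw [F_succ, add_mul, DD_succ]
        have key1 : F N (r + 1) * DD (r + 1) ≤ 2 ^ (sig N (r + 1) + TT (r + 1)) := ih (r + 1)
        have key2 : F N r * DD r ≤ 2 ^ (sig N r + TT r) := ih r
        rw [DD_succ] at key1
        have e0 : sig N (r + 1) = sig N r + (N - r) := by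
          rw [sig, sig, Finset.sum_range_succ]
        have e1 : sig (N + 1) (r + 1) = sig N (r + 1) + (r + 1) := sig_succ_N hrN
        have e2 : sig (N + 1) (r + 1) = (N + 1) + sig N r := sig_shift N r
        have e3 : TT (r + 1) = TT r + (r + 1) := TT_succ r
        -- both summands bounded by 2^(sig N (r+1) + TT (r+1)) and 2^(r+1)-1 times it
        have hA : 2 ^ (N + 1) * F N r * ((2 ^ (r + 1) - 1) * DD r)
            = (2 ^ (r + 1) - 1) * 2 ^ (N + 1) * (F N r * DD r) := by ring
        have hbound2 : 2 ^ (N + 1) * F N r * ((2 ^ (r + 1) - 1) * DD r)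
            ≤ (2 ^ (r + 1) - 1) * 2 ^ (sig N (r + 1) + TT (r + 1)) := by
          rw [hA]
          calc (2 ^ (r + 1) - 1) * 2 ^ (N + 1) * (F N r * DD r)
              ≤ (2 ^ (r + 1) - 1) * 2 ^ (N + 1) * 2 ^ (sig N r + TT r) :=
                Nat.mul_le_mul_left _ key2
            _ = (2 ^ (r + 1) - 1) * 2 ^ (N + 1 + (sig N r + TT r)) := by
                rw [mul_assoc, ← pow_add]
            _ = (2 ^ (r + 1) - 1) * 2 ^ (sig N (r + 1) + TT (r + 1)) := by
                congr 2
                omega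
        calc F N (r + 1) * ((2 ^ (r + 1) - 1) * DD r)
            + 2 ^ (N + 1) * F N r * ((2 ^ (r + 1) - 1) * DD r)
            ≤ 2 ^ (sig N (r + 1) + TT (r + 1))
              + (2 ^ (r + 1) - 1) * 2 ^ (sig N (r + 1) + TT (r + 1)) := by
              exact Nat.add_le_add key1 hbound2
          _ = 2 ^ (r + 1) * 2 ^ (sig N (r + 1) + TT (r + 1)) := by
              have hsub : (2 ^ (r + 1) - 1) * 2 ^ (sig N (r + 1) + TT (r + 1))
                  = 2 ^ (r + 1) * 2 ^ (sig N (r + 1) + TT (r + 1))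
                    - 2 ^ (sig N (r + 1) + TT (r + 1)) := Nat.sub_one_mul _ _
              have hle : 2 ^ (sig N (r + 1) + TT (r + 1))
                  ≤ 2 ^ (r + 1) * 2 ^ (sig N (r + 1) + TT (r + 1)) :=
                Nat.le_mul_of_pos_left _ (Nat.pow_pos (by norm_num))
              omega
          _ = 2 ^ (sig (N + 1) (r + 1) + TT (r + 1)) := by
              rw [← pow_add]
              congr 1
              omega

lemma TT_ge (r : ℕ) : r ≤ TT r := by
  induction r with
  | zero => simp [TT]
  | succ r ih => rw [TT_succ]; omega

/-- `2^(TT r) + 2^(TT r + 1 - r) ≤ 4 * DD r` -/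
lemma PR : ∀ r : ℕ, 2 ^ TT r + 2 ^ (TT r + 1 - r) ≤ 4 * DD r := by
  intro r
  induction r with
  | zero => simp [TT, DD]
  | succ r ih =>
    rcases Nat.eq_zero_or_pos r with rfl | hr
    · norm_num [TT_succ, DD_succ, TT, DD]
    -- r ≥ 1, prove claim for r+1
    obtain ⟨p, hp, hp1⟩ : ∃ p, TT r + 1 = p + r ∧ 1 ≤ p := by
      refine ⟨TT r + 1 - r, ?_, ?_⟩ <;> have := TT_ge r <;> omega
    obtain ⟨m, rfl⟩ : ∃ m, r = m + 1 := ⟨r - 1, by omega⟩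
    have e1 : TT (m + 1) + 1 - (m + 1) = p := by omega
    have e2 : TT (m + 1) = p + m := by omega
    have e3 : TT (m + 1 + 1) = p + m + m + 2 := by rw [TT_succ]; omega
    have e4 : TT (m + 1 + 1) + 1 - (m + 1 + 1) = p + m + 1 := by rw [TT_succ]; omega
    rw [e1, e2] at ih
    rw [e4, e3]
    have expand : 2 ^ (p + m + m + 2) + 2 ^ (p + m + 1)
        ≤ (2 ^ (p + m) + 2 ^ p) * (2 ^ (m + 1 + 1) - 1) := by
      have h2 : (1:ℕ) ≤ 2 ^ (m + 1 + 1) := Nat.one_le_two_pow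
      have hmul : (2 ^ (p + m) + 2 ^ p) * (2 ^ (m + 1 + 1) - 1)
          = (2 ^ (p + m) + 2 ^ p) * 2 ^ (m + 1 + 1) - (2 ^ (p + m) + 2 ^ p) := by
        rw [Nat.mul_sub_one]
      rw [hmul]
      have key : 2 ^ (p + m + m + 2) + 2 ^ (p + m + 1) + (2 ^ (p + m) + 2 ^ p)
          ≤ (2 ^ (p + m) + 2 ^ p) * 2 ^ (m + 1 + 1) := by
        have a1 : 2 ^ (p + m + m + 2) = 2 ^ (p + m) * 2 ^ (m + 1 + 1) := by
          rw [show p + m + m + 2 = (p + m) + (m + 1 + 1) by omega, pow_add]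
        have a2 : 2 ^ (p + m + 1) + (2 ^ (p + m) + 2 ^ p) ≤ 2 ^ p * 2 ^ (m + 1 + 1) := by
          have b1 : 2 ^ (p + m + 1) = 2 ^ p * 2 ^ m * 2 := by rw [← pow_add]; ring_nf
          have b2 : 2 ^ (p + m) = 2 ^ p * 2 ^ m := by rw [← pow_add]
          have b3 : 2 ^ (m + 1 + 1) = 2 ^ m * 4 := by ring
          have hm1 : (1:ℕ) ≤ 2 ^ m := Nat.one_le_two_pow
          have hpm : (1:ℕ) ≤ 2 ^ p := Nat.one_le_two_pow
          rw [b1, b2, b3]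
          nlinarith
        have hdist : (2 ^ (p + m) + 2 ^ p) * 2 ^ (m + 1 + 1)
            = 2 ^ (p + m) * 2 ^ (m + 1 + 1) + 2 ^ p * 2 ^ (m + 1 + 1) := add_mul _ _ _
        omega
      omega
    calc 2 ^ (p + m + m + 2) + 2 ^ (p + m + 1)
        ≤ (2 ^ (p + m) + 2 ^ p) * (2 ^ (m + 1 + 1) - 1) := expand
      _ ≤ 4 * DD (m + 1) * (2 ^ (m + 1 + 1) - 1) := Nat.mul_le_mul_right _ ih
      _ = 4 * ((2 ^ (m + 1 + 1) - 1) * DD (m + 1)) := by ring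
      _ = 4 * DD (m + 1 + 1) := by rw [DD_succ (m + 1)]

/-- the final numeric bound: `F N r ≤ 4 * 2^(sig N r)` -/
lemma F_le (N r : ℕ) : F N r ≤ 2 ^ (sig N r + 2) := by
  have h1 : F N r * DD r ≤ 2 ^ (sig N r + TT r) := FD N r
  have h2 : 2 ^ TT r ≤ 4 * DD r := le_trans (Nat.le_add_right _ _) (PR r)
  have h3 : F N r * 2 ^ TT r ≤ 2 ^ (sig N r + 2) * 2 ^ TT r := by
    calc F N r * 2 ^ TT r ≤ F N r * (4 * DD r) := Nat.mul_le_mul_left _ h2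
      _ = 4 * (F N r * DD r) := by ring
      _ ≤ 4 * 2 ^ (sig N r + TT r) := Nat.mul_le_mul_left _ h1
      _ = 2 ^ (sig N r + 2) * 2 ^ TT r := by
          rw [show (4:ℕ) = 2 ^ 2 by norm_num, ← pow_add, ← pow_add]
          congr 1
          omega
  exact Nat.le_of_mul_le_mul_right h3 (Nat.pow_pos (by norm_num))

end S10

namespace S10

/-! ### The greedy process -/

section Main

variable (t : ℕ) (c : Fin (2 ^ (2 * t - 3)) → Fin (2 ^ (2 * t - 3)) → Bool)

abbrev V := Fin (2 ^ (2 * t - 3))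

def v0 : V t := ⟨0, Nat.pow_pos (by norm_num)⟩

/-- sizes along the process -/
def sz (k : ℕ) : ℕ := 2 ^ (2 * t - 3 - k)

/-- the `b`-colored neighbors of `v` inside `A` -/
def cls (A : Finset (V t)) (v : V t) (b : Bool) : Finset (V t) :=
  A.filter fun u => u ≠ v ∧ c v u = b

/-- majority color of `v` in `A` -/
def mj (A : Finset (V t)) (v : V t) : Bool :=
  decide ((cls t c A v false).card ≤ (cls t c A v true).card)

/-- the nested sets of the process driven by the index sequence `x` -/
def AA (x : ℕ → ℕ) : ℕ → Finset (V t)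
  | 0 => Finset.univ
  | k + 1 =>
      trunc (cls t c (AA x k) (pick (AA x k) (v0 t) (x k))
        (mj t c (AA x k) (pick (AA x k) (v0 t) (x k)))) (sz t (k + 1))

def ww (x : ℕ → ℕ) (k : ℕ) : V t := pick (AA t c x k) (v0 t) (x k)

def chi (x : ℕ → ℕ) (k : ℕ) : Bool := mj t c (AA t c x k) (ww t c x k)

lemma mem_cls {A : Finset (V t)} {v u : V t} {b : Bool} (h : u ∈ cls t c A v b) :
    u ∈ A ∧ u ≠ v ∧ c v u = b := by
  simpa [cls] using (Finset.mem_filter.1 h)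

lemma cls_card_sum {A : Finset (V t)} {v : V t} (hv : v ∈ A) :
    (cls t c A v false).card + (cls t c A v true).card = A.card - 1 := by
  have hdisj : Disjoint (cls t c A v false) (cls t c A v true) := by
    rw [Finset.disjoint_left]
    intro u hu hu'
    have h1 := (mem_cls t c hu).2.2
    have h2 := (mem_cls t c hu').2.2
    rw [h1] at h2
    exact Bool.noConfusion h2
  have hunion : (cls t c A v false) ∪ (cls t c A v true) = A.erase v := by
    ext u
    simp only [Finset.mem_union, cls, Finset.mem_filter, Finset.mem_erase]
    by_cases hb : c v u = true
    · simp [hb]; tauto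
    · have : c v u = false := by simp [Bool.not_eq_true] at hb; exact hb
      simp [this]; tauto
  rw [← Finset.card_union_of_disjoint hdisj, hunion, Finset.card_erase_of_mem hv]

lemma mj_card {A : Finset (V t)} {v : V t} (hv : v ∈ A) (m : ℕ) (hA : A.card = 2 * m) :
    m ≤ (cls t c A v (mj t c A v)).card := by
  have hsum := cls_card_sum t c hv
  have hpos : 1 ≤ A.card := Finset.card_pos.2 ⟨v, hv⟩
  by_cases h : (cls t c A v false).card ≤ (cls t c A v true).card
  · have : mj t c A v = true := by simp [mj, h]
    rw [this]; omega
  · have : mj t c A v = false := by simp [mj, h]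
    rw [this]; omega

lemma card_AA (x : ℕ → ℕ) (hx : ∀ j, x j < sz t j) :
    ∀ k, k ≤ 2 * t - 3 → (AA t c x k).card = sz t k := by
  intro k
  induction k with
  | zero =>
    intro _
    simp [AA, sz]
  | succ k ih =>
    intro hk
    have hk' : k ≤ 2 * t - 3 := by omega
    have hcard : (AA t c x k).card = sz t k := ih hk'
    have hv : pick (AA t c x k) (v0 t) (x k) ∈ AA t c x k :=
      pick_mem _ _ _ (by rw [hcard]; exact hx k)
    have hsz : sz t k = 2 * sz t (k + 1) := by
      rw [sz, sz]
      have : 2 * t - 3 - k = (2 * t - 3 - (k + 1)) + 1 := by omega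
      rw [this, pow_succ]
      ring
    have hmaj := mj_card t c hv (sz t (k + 1)) (by rw [hcard, hsz])
    show (trunc _ _).card = _
    exact card_trunc _ _ hmaj

lemma AA_succ_sub (x : ℕ → ℕ) (k : ℕ) :
    AA t c x (k + 1) ⊆ cls t c (AA t c x k) (ww t c x k) (chi t c x k) :=
  trunc_subset _ _

lemma AA_sub (x : ℕ → ℕ) (k : ℕ) : AA t c x (k + 1) ⊆ AA t c x k := by
  intro u hu
  exact (mem_cls t c (AA_succ_sub t c x k hu)).1

lemma AA_le (x : ℕ → ℕ) {k l : ℕ} (h : k ≤ l) : AA t c x l ⊆ AA t c x k := by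
  induction l with
  | zero =>
    have : k = 0 := by omega
    subst this; exact fun u hu => hu
  | succ l ih =>
    rcases Nat.lt_or_ge k (l + 1) with h' | h'
    · exact fun u hu => ih (by omega) (AA_sub t c x l hu)
    · have : k = l + 1 := by omega
      subst this; exact fun u hu => hu

lemma ww_mem (x : ℕ → ℕ) (hx : ∀ j, x j < sz t j) {k : ℕ} (hk : k ≤ 2 * t - 3) :
    ww t c x k ∈ AA t c x k :=
  pick_mem _ _ _ (by rw [card_AA t c x hx k hk]; exact hx k)

lemma ww_notmem (x : ℕ → ℕ) (k : ℕ) : ww t c x k ∉ AA t c x (k + 1) := by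
  intro h
  exact (mem_cls t c (AA_succ_sub t c x k h)).2.1 rfl

lemma ww_ne (x : ℕ → ℕ) (hx : ∀ j, x j < sz t j) {k l : ℕ} (h : k < l) (hl : l ≤ 2 * t - 3) :
    ww t c x k ≠ ww t c x l := by
  intro he
  have h1 : ww t c x l ∈ AA t c x (k + 1) :=
    AA_le t c x (by omega) (ww_mem t c x hx hl)
  rw [← he] at h1
  exact ww_notmem t c x k h1

lemma ww_color (x : ℕ → ℕ) (hx : ∀ j, x j < sz t j) {k l : ℕ} (h : k < l) (hl : l ≤ 2 * t - 3) :
    c (ww t c x k) (ww t c x l) = chi t c x k := by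
  have h1 : ww t c x l ∈ AA t c x (k + 1) :=
    AA_le t c x (by omega) (ww_mem t c x hx hl)
  exact (mem_cls t c (AA_succ_sub t c x k h1)).2.2

lemma AA_local {x y : ℕ → ℕ} : ∀ k, (∀ j, j < k → x j = y j) → AA t c x k = AA t c y k := by
  intro k
  induction k with
  | zero => intro _; rfl
  | succ k ih =>
    intro h
    have h1 : AA t c x k = AA t c y k := ih fun j hj => h j (by omega)
    show trunc _ _ = trunc _ _
    rw [h1, h k (by omega)]

/-! ### Clique extraction -/

def bb (x : ℕ → ℕ) : Bool :=
  decide (t - 1 ≤ ((range (2 * t - 3)).filter fun k => chi t c x k = true).card)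

def posS (x : ℕ → ℕ) : Finset ℕ :=
  trunc ((range (2 * t - 3)).filter fun k => chi t c x k = bb t c x) (t - 1)

lemma posS_sub (x : ℕ → ℕ) :
    posS t c x ⊆ (range (2 * t - 3)).filter fun k => chi t c x k = bb t c x :=
  trunc_subset _ _

lemma posS_sub_range (x : ℕ → ℕ) : ∀ k ∈ posS t c x, k < 2 * t - 3 := fun k hk =>
  Finset.mem_range.1 (Finset.mem_filter.1 (posS_sub t c x hk)).1

lemma chi_posS (x : ℕ → ℕ) {k : ℕ} (hk : k ∈ posS t c x) : chi t c x k = bb t c x :=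
  (Finset.mem_filter.1 (posS_sub t c x hk)).2

lemma card_posS (x : ℕ → ℕ) (ht : 2 ≤ t) : (posS t c x).card = t - 1 := by
  apply card_trunc
  have hsum := Finset.card_filter_add_card_filter_not
    (s := range (2 * t - 3)) (p := fun k => chi t c x k = true)
  have hneg : (range (2 * t - 3)).filter (fun k => ¬ (chi t c x k = true))
      = (range (2 * t - 3)).filter (fun k => chi t c x k = false) := by
    apply Finset.filter_congr; intro u _; simp [Bool.not_eq_true]
  rw [hneg, Finset.card_range] at hsum
  by_cases h : t - 1 ≤ ((range (2 * t - 3)).filter fun k => chi t c x k = true).card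
  · have hb : bb t c x = true := by simp [bb, h]
    rw [hb]; exact h
  · have hb : bb t c x = false := by simp [bb, h]
    rw [hb]; omega

def cliq (x : ℕ → ℕ) : Finset (V t) :=
  (posS t c x).image (ww t c x) ∪ {ww t c x (2 * t - 3)}

lemma mem_cliq (x : ℕ → ℕ) {u : V t} (hu : u ∈ cliq t c x) :
    ∃ k, k ≤ 2 * t - 3 ∧ (k ∈ posS t c x ∨ k = 2 * t - 3) ∧ u = ww t c x k := by
  rcases Finset.mem_union.1 hu with h | h
  · rcases Finset.mem_image.1 h with ⟨k, hk, rfl⟩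
    exact ⟨k, by have := posS_sub_range t c x k hk; omega, Or.inl hk, rfl⟩
  · exact ⟨2 * t - 3, le_refl _, Or.inr rfl, by simpa using h⟩

lemma ww_inj_posS (x : ℕ → ℕ) (hx : ∀ j, x j < sz t j) :
    Set.InjOn (ww t c x) ↑(posS t c x) := by
  intro k hk l hl he
  by_contra hne
  rcases Nat.lt_or_ge k l with h | h
  · exact ww_ne t c x hx h (by have := posS_sub_range t c x l hl; omega) he
  · have h' : l < k := by omega
    exact ww_ne t c x hx h' (by have := posS_sub_range t c x k hk; omega) he.symm

lemma cliq_card (x : ℕ → ℕ) (hx : ∀ j, x j < sz t j) (ht : 2 ≤ t) : (cliq t c x).card = t := by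
  rw [cliq, Finset.card_union_of_disjoint, Finset.card_image_of_injOn (ww_inj_posS t c x hx),
    card_posS t c x ht, Finset.card_singleton]
  · omega
  · rw [Finset.disjoint_singleton_right]
    intro h
    rcases Finset.mem_image.1 h with ⟨k, hk, he⟩
    exact ww_ne t c x hx (by have := posS_sub_range t c x k hk; omega) (le_refl _) he

lemma cliq_mono (x : ℕ → ℕ) (hx : ∀ j, x j < sz t j)
    (hsym : ∀ i j, c i j = c j i) :
    ∃ b, ∀ i ∈ cliq t c x, ∀ j ∈ cliq t c x, i ≠ j → c i j = b := by
  refine ⟨bb t c x, fun i hi j hj hne => ?_⟩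
  obtain ⟨k, hk, hkp, rfl⟩ := mem_cliq t c x hi
  obtain ⟨l, hl, hlp, rfl⟩ := mem_cliq t c x hj
  have hkl : k ≠ l := fun h => hne (by rw [h])
  rcases Nat.lt_or_ge k l with h | h
  · have hkpos : k ∈ posS t c x := by
      rcases hkp with h' | h'
      · exact h'
      · omega
    rw [ww_color t c x hx h hl]
    exact chi_posS t c x hkpos
  · have h' : l < k := by omega
    have hlpos : l ∈ posS t c x := by
      rcases hlp with h'' | h''
      · exact h''
      · omega
    rw [hsym]
    rw [ww_color t c x hx h' hk]
    exact chi_posS t c x hlpos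

/-! ### Transcripts and the counting map -/

def Tr : Finset (Fin (2 * t - 2) → ℕ) := Fintype.piFinset fun k => range (sz t k.val)

def xe (x : Fin (2 * t - 2) → ℕ) : ℕ → ℕ := fun k =>
  if h : k < 2 * t - 2 then x ⟨k, h⟩ else 0

lemma xe_lt {x : Fin (2 * t - 2) → ℕ} (hx : x ∈ Tr t) : ∀ j, xe t x j < sz t j := by
  intro j
  rw [xe]
  split
  · exact Finset.mem_range.1 ((Fintype.mem_piFinset.1 hx) _)
  · exact Nat.pow_pos (by norm_num)

def Phi (x : Fin (2 * t - 2) → ℕ) : Finset (V t) := cliq t c (xe t x)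

/-! fiber encoding -/

def lT (T : Finset (V t)) : List (V t) := T.sort (· ≤ ·)

def QQ (x : Fin (2 * t - 2) → ℕ) : Finset ℕ := insert (2 * t - 3) (posS t c (xe t x))

def lQ (x : Fin (2 * t - 2) → ℕ) : List ℕ := (QQ t c x).sort (· ≤ ·)

def fRaw (T : Finset (V t)) (x : Fin (2 * t - 2) → ℕ) : Fin t → Fin t := fun i =>
  ⟨((lT t T).idxOf (ww t c (xe t x) ((lQ t c x).getD i.val 0))) % t,
    Nat.mod_lt _ i.pos⟩

def embOf (T : Finset (V t)) (x : Fin (2 * t - 2) → ℕ) : Fin t ↪ Fin t :=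
  if h : Function.Injective (fRaw t c T x) then ⟨_, h⟩ else Function.Embedding.refl _

def zz (x : Fin (2 * t - 2) → ℕ) : Fin (2 * t - 2) → ℕ := fun k =>
  if (k : ℕ) ∈ posS t c (xe t x) then 0 else x k

noncomputable def Dom : Finset (Σ _ : Finset ℕ, (Fin t ↪ Fin t) × (Fin (2 * t - 2) → ℕ)) :=
  ((range (2 * t - 3)).powersetCard (t - 1)).sigma fun P =>
    (Finset.univ : Finset (Fin t ↪ Fin t)) ×ˢ
      Fintype.piFinset (fun k : Fin (2 * t - 2) =>
        if (k : ℕ) ∈ P then ({0} : Finset ℕ) else range (sz t k.val))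

noncomputable def psi (T : Finset (V t)) (x : Fin (2 * t - 2) → ℕ) :
    Σ _ : Finset ℕ, (Fin t ↪ Fin t) × (Fin (2 * t - 2) → ℕ) :=
  ⟨posS t c (xe t x), (embOf t c T x, zz t c x)⟩

lemma mem_QQ_le {x : Fin (2 * t - 2) → ℕ} {q : ℕ} (hq : q ∈ QQ t c x) : q ≤ 2 * t - 3 := by
  rcases Finset.mem_insert.1 hq with rfl | h
  · exact le_refl _
  · have := posS_sub_range t c (xe t x) q h
    omega

lemma QQ_card (ht2 : 2 ≤ t) (x : Fin (2 * t - 2) → ℕ) : (QQ t c x).card = t := by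
  rw [QQ, Finset.card_insert_of_notMem, card_posS t c _ ht2]
  · omega
  · intro h
    have := posS_sub_range t c (xe t x) _ h
    omega

lemma lQ_len (ht2 : 2 ≤ t) (x : Fin (2 * t - 2) → ℕ) : (lQ t c x).length = t := by
  rw [lQ, Finset.length_sort, QQ_card t c ht2]

lemma Phi_card {x : Fin (2 * t - 2) → ℕ} (hx : x ∈ Tr t) (ht2 : 2 ≤ t) :
    (Phi t c x).card = t :=
  cliq_card t c _ (xe_lt t hx) ht2

lemma lT_len {T : Finset (V t)} {x : Fin (2 * t - 2) → ℕ} (hx : x ∈ Tr t)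
    (hT : Phi t c x = T) (ht2 : 2 ≤ t) : (lT t T).length = t := by
  rw [lT, Finset.length_sort, ← hT, Phi_card t c hx ht2]

lemma ww_mem_T {T : Finset (V t)} {x : Fin (2 * t - 2) → ℕ}
    (hT : Phi t c x = T) {q : ℕ} (hq : q ∈ QQ t c x) : ww t c (xe t x) q ∈ T := by
  rw [← hT, Phi, cliq]
  rcases Finset.mem_insert.1 hq with rfl | h
  · exact Finset.mem_union_right _ (Finset.mem_singleton_self _)
  · exact Finset.mem_union_left _ (Finset.mem_image_of_mem _ h)

lemma lQ_mem_QQ (ht2 : 2 ≤ t) {x : Fin (2 * t - 2) → ℕ} {i : ℕ} (hi : i < t) :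
    (lQ t c x).getD i 0 ∈ QQ t c x := by
  rw [List.getD_eq_getElem _ _ (by rw [lQ_len t c ht2]; exact hi)]
  exact (Finset.mem_sort _).1 (List.getElem_mem _)

lemma fRaw_val {T : Finset (V t)} {x : Fin (2 * t - 2) → ℕ} (hx : x ∈ Tr t)
    (hT : Phi t c x = T) (ht2 : 2 ≤ t) (i : Fin t) :
    (fRaw t c T x i).val = (lT t T).idxOf (ww t c (xe t x) ((lQ t c x).getD i.val 0)) := by
  apply Nat.mod_eq_of_lt
  have hmem : ww t c (xe t x) ((lQ t c x).getD i.val 0) ∈ lT t T := by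
    rw [lT, Finset.mem_sort]
    exact ww_mem_T t c hT (lQ_mem_QQ t c ht2 i.isLt)
  have h := List.idxOf_lt_length_iff.2 hmem
  rwa [lT_len t c hx hT ht2] at h

lemma fRaw_inj {T : Finset (V t)} {x : Fin (2 * t - 2) → ℕ} (hx : x ∈ Tr t)
    (hT : Phi t c x = T) (ht2 : 2 ≤ t) : Function.Injective (fRaw t c T x) := by
  intro i i' h
  have hv := congrArg Fin.val h
  rw [fRaw_val t c hx hT ht2, fRaw_val t c hx hT ht2] at hv
  have hq : (lQ t c x).getD i.val 0 ∈ QQ t c x := lQ_mem_QQ t c ht2 i.isLt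
  have hq' : (lQ t c x).getD i'.val 0 ∈ QQ t c x := lQ_mem_QQ t c ht2 i'.isLt
  have hm1 : ww t c (xe t x) ((lQ t c x).getD i.val 0) ∈ lT t T := by
    rw [lT, Finset.mem_sort]; exact ww_mem_T t c hT hq
  have hm2 : ww t c (xe t x) ((lQ t c x).getD i'.val 0) ∈ lT t T := by
    rw [lT, Finset.mem_sort]; exact ww_mem_T t c hT hq'
  have hww := (List.idxOf_inj hm1).1 hv
  have hqq : (lQ t c x).getD i.val 0 = (lQ t c x).getD i'.val 0 := by
    by_contra hne
    rcases Nat.lt_or_ge ((lQ t c x).getD i.val 0) ((lQ t c x).getD i'.val 0) with hlt | hge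
    · exact ww_ne t c _ (xe_lt t hx) hlt (mem_QQ_le t c hq') hww
    · have hlt : (lQ t c x).getD i'.val 0 < (lQ t c x).getD i.val 0 := by omega
      exact ww_ne t c _ (xe_lt t hx) hlt (mem_QQ_le t c hq) hww.symm
  have hil : i.val < (lQ t c x).length := by rw [lQ_len t c ht2]; exact i.isLt
  have hil' : i'.val < (lQ t c x).length := by rw [lQ_len t c ht2]; exact i'.isLt
  rw [List.getD_eq_getElem _ _ hil, List.getD_eq_getElem _ _ hil'] at hqq
  exact Fin.ext (((Finset.sort_nodup _ _).getElem_inj_iff).1 hqq)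

lemma psi_maps {T : Finset (V t)} {x : Fin (2 * t - 2) → ℕ} (hx : x ∈ Tr t)
    (ht2 : 2 ≤ t) : psi t c T x ∈ Dom t := by
  rw [Dom, psi, Finset.mem_sigma]
  constructor
  · rw [Finset.mem_powersetCard]
    constructor
    · intro k hk
      exact Finset.mem_range.2 (posS_sub_range t c (xe t x) k hk)
    · exact card_posS t c _ ht2
  · rw [Finset.mem_product]
    refine ⟨Finset.mem_univ _, Fintype.mem_piFinset.2 fun k => ?_⟩
    by_cases h : (k : ℕ) ∈ posS t c (xe t x)
    · simp [zz, h]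
    · simp only [zz, if_neg h]
      exact (Fintype.mem_piFinset.1 hx) k

lemma psi_inj (T : Finset (V t)) (ht2 : 2 ≤ t) :
    Set.InjOn (psi t c T) ↑((Tr t).filter fun x => Phi t c x = T) := by
  intro x hx' y hy' heq
  simp only [Finset.coe_filter, Set.mem_setOf_eq] at hx' hy'
  obtain ⟨hx, hxT⟩ := hx'
  obtain ⟨hy, hyT⟩ := hy'
  have hP : posS t c (xe t x) = posS t c (xe t y) := congrArg Sigma.fst heq
  have hpair : (embOf t c T x, zz t c x) = (embOf t c T y, zz t c y) :=
    eq_of_heq (Sigma.mk.inj_iff.1 heq).2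
  have hemb := congrArg Prod.fst hpair
  have hzz := congrArg Prod.snd hpair
  simp only at hemb hzz
  have hfx : Function.Injective (fRaw t c T x) := fRaw_inj t c hx hxT ht2
  have hfy : Function.Injective (fRaw t c T y) := fRaw_inj t c hy hyT ht2
  rw [embOf, dif_pos hfx, embOf, dif_pos hfy, Function.Embedding.mk.injEq] at hemb
  have hQ : QQ t c x = QQ t c y := by rw [QQ, QQ, hP]
  have hlQ : lQ t c x = lQ t c y := by rw [lQ, lQ, hQ]
  have key : ∀ k, xe t x k = xe t y k := by
    intro k
    induction k using Nat.strong_induction_on with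
    | _ k ih =>
      by_cases hk2 : k < 2 * t - 2
      · by_cases hkP : k ∈ posS t c (xe t x)
        · have hAeq : AA t c (xe t x) k = AA t c (xe t y) k := AA_local t c k ih
          have hkQ : k ∈ QQ t c x := Finset.mem_insert_of_mem hkP
          have hklQ : k ∈ lQ t c x := (Finset.mem_sort _).2 hkQ
          have hi : (lQ t c x).idxOf k < t := by
            have h := List.idxOf_lt_length_iff.2 hklQ
            rwa [lQ_len t c ht2] at h
          have hil : (lQ t c x).idxOf k < (lQ t c x).length :=
            List.idxOf_lt_length_iff.2 hklQ
          have hgetD : (lQ t c x).getD ((lQ t c x).idxOf k) 0 = k := by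
            rw [List.getD_eq_getElem _ _ hil]
            exact List.getElem_idxOf _
          have h1 := congrFun hemb ⟨(lQ t c x).idxOf k, hi⟩
          have hv1 : (fRaw t c T x ⟨(lQ t c x).idxOf k, hi⟩).val
              = (lT t T).idxOf (ww t c (xe t x) k) := by
            rw [fRaw_val t c hx hxT ht2]
            rw [hgetD]
          have hv2 : (fRaw t c T y ⟨(lQ t c x).idxOf k, hi⟩).val
              = (lT t T).idxOf (ww t c (xe t y) k) := by
            rw [fRaw_val t c hy hyT ht2]
            rw [← hlQ, hgetD]
          have hidx : (lT t T).idxOf (ww t c (xe t x) k)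
              = (lT t T).idxOf (ww t c (xe t y) k) := by
            rw [← hv1, ← hv2, h1]
          have hm1 : ww t c (xe t x) k ∈ lT t T := by
            rw [lT, Finset.mem_sort]; exact ww_mem_T t c hxT hkQ
          have hm2 : ww t c (xe t y) k ∈ lT t T := by
            rw [lT, Finset.mem_sort]; exact ww_mem_T t c hyT (hQ ▸ hkQ)
          have hww : ww t c (xe t x) k = ww t c (xe t y) k :=
            (List.idxOf_inj hm1).1 hidx
          have hkle : k ≤ 2 * t - 3 := by
            have := posS_sub_range t c (xe t x) k hkP
            omega
          have hcx : (AA t c (xe t x) k).card = sz t k :=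
            card_AA t c _ (xe_lt t hx) k hkle
          have e2 : ww t c (xe t y) k = pick (AA t c (xe t x) k) (v0 t) (xe t y k) := by
            rw [ww, hAeq]
          have e1 : ww t c (xe t x) k = pick (AA t c (xe t x) k) (v0 t) (xe t x k) := rfl
          apply pick_inj (AA t c (xe t x) k) (v0 t)
            (by rw [hcx]; exact xe_lt t hx k) (by rw [hcx]; exact xe_lt t hy k)
          rw [← e1, ← e2]
          exact hww
        · have h1 := congrFun hzz ⟨k, hk2⟩
          simp only [zz] at h1
          rw [if_neg hkP, ← hP, if_neg hkP] at h1
          rw [xe, xe, dif_pos hk2, dif_pos hk2]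
          exact h1
      · rw [xe, xe, dif_neg hk2, dif_neg hk2]
  funext i
  have h := key i.val
  rw [xe, xe, dif_pos i.isLt, dif_pos i.isLt] at h
  simpa using h

lemma fiber_le (T : Finset (V t)) (ht2 : 2 ≤ t) :
    ((Tr t).filter fun x => Phi t c x = T).card ≤ (Dom t).card := by
  apply Finset.card_le_card_of_injOn (psi t c T)
  · intro x hx
    exact psi_maps t c (Finset.mem_filter.1 hx).1 ht2
  · exact psi_inj t c T ht2

/-! ### Cardinality computations -/

lemma Tr_card : (Tr t).card = 2 ^ (∑ k ∈ range (2 * t - 2), (2 * t - 3 - k)) := by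
  rw [Tr, Fintype.card_piFinset]
  simp only [Finset.card_range]
  rw [Fin.prod_univ_eq_prod_range (fun k => sz t k) (2 * t - 2)]
  rw [show (fun k => sz t k) = fun k => 2 ^ (2 * t - 3 - k) from rfl]
  exact Finset.prod_pow_eq_pow_sum _ _ _

lemma Dom_card : (Dom t).card = t.factorial *
    ∑ P ∈ (range (2 * t - 3)).powersetCard (t - 1),
      ∏ k ∈ range (2 * t - 2), (if k ∈ P then 1 else sz t k) := by
  rw [Dom, Finset.card_sigma, Finset.mul_sum]
  refine Finset.sum_congr rfl fun P hP => ?_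
  rw [Finset.card_product, Finset.card_univ, Fintype.card_embedding_eq, Fintype.card_fin,
    Nat.descFactorial_self, Fintype.card_piFinset]
  congr 1
  rw [← Fin.prod_univ_eq_prod_range (fun k => if k ∈ P then 1 else sz t k) (2 * t - 2)]
  refine Finset.prod_congr rfl fun k _ => ?_
  rw [apply_ite Finset.card, Finset.card_singleton, Finset.card_range]

/-! ### The sum bound -/

def SSet (P : Finset ℕ) : Finset ℕ := (range (2 * t - 3) \ P).image (fun k => 2 * t - 3 - k)

lemma sdiff_inj {P : Finset ℕ} :
    Set.InjOn (fun k => 2 * t - 3 - k) ↑(range (2 * t - 3) \ P) := by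
  intro a ha b hb h
  have ha' := Finset.mem_range.1 (Finset.mem_sdiff.1 ha).1
  have hb' := Finset.mem_range.1 (Finset.mem_sdiff.1 hb).1
  simp only at h
  omega

lemma prod_eq_SSet {P : Finset ℕ} (ht2 : 2 ≤ t)
    (hP : P ∈ (range (2 * t - 3)).powersetCard (t - 1)) :
    ∏ k ∈ range (2 * t - 2), (if k ∈ P then 1 else sz t k) = 2 ^ (∑ j ∈ SSet t P, j) := by
  obtain ⟨hP1, hP2⟩ := Finset.mem_powersetCard.1 hP
  have hPsub : P ⊆ range (2 * t - 2) := by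
    intro k hk
    have := Finset.mem_range.1 (hP1 hk)
    exact Finset.mem_range.2 (by omega)
  have hsplit : ∏ k ∈ range (2 * t - 2), (if k ∈ P then 1 else sz t k)
      = ∏ k ∈ range (2 * t - 2) \ P, sz t k := by
    rw [← Finset.prod_sdiff hPsub]
    have h1 : ∏ k ∈ P, (if k ∈ P then 1 else sz t k) = 1 :=
      Finset.prod_eq_one fun k hk => if_pos hk
    have h2 : ∏ k ∈ range (2 * t - 2) \ P, (if k ∈ P then 1 else sz t k)
        = ∏ k ∈ range (2 * t - 2) \ P, sz t k :=
      Finset.prod_congr rfl fun k hk => if_neg (Finset.mem_sdiff.1 hk).2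
    rw [h1, h2, mul_one]
  have hnotP : 2 * t - 3 ∉ P := by
    intro h
    have := Finset.mem_range.1 (hP1 h)
    omega
  have hsd : range (2 * t - 2) \ P = insert (2 * t - 3) (range (2 * t - 3) \ P) := by
    ext a
    simp only [Finset.mem_sdiff, Finset.mem_range, Finset.mem_insert]
    constructor
    · rintro ⟨h1, h2⟩
      by_cases h3 : a = 2 * t - 3
      · exact Or.inl h3
      · exact Or.inr ⟨by omega, h2⟩
    · rintro (rfl | ⟨h1, h2⟩)
      · exact ⟨by omega, hnotP⟩
      · exact ⟨by omega, h2⟩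
  have hnotmem : 2 * t - 3 ∉ range (2 * t - 3) \ P := by
    intro h
    have := Finset.mem_range.1 (Finset.mem_sdiff.1 h).1
    omega
  rw [hsplit, hsd, Finset.prod_insert hnotmem]
  have hsz1 : sz t (2 * t - 3) = 1 := by
    rw [sz, Nat.sub_self, pow_zero]
  rw [hsz1, one_mul]
  rw [show (fun k => sz t k) = fun k => 2 ^ (2 * t - 3 - k) from rfl]
  rw [Finset.prod_pow_eq_pow_sum]
  congr 1
  rw [SSet, Finset.sum_image (fun a ha b hb h => sdiff_inj t ha hb h)]

lemma SSet_mem {P : Finset ℕ} (hP : P ∈ (range (2 * t - 3)).powersetCard (t - 1))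
    (ht2 : 2 ≤ t) : SSet t P ∈ (Icc 1 (2 * t - 3)).powersetCard (t - 2) := by
  obtain ⟨hP1, hP2⟩ := Finset.mem_powersetCard.1 hP
  rw [Finset.mem_powersetCard]
  constructor
  · intro j hj
    rcases Finset.mem_image.1 hj with ⟨k, hk, rfl⟩
    have := Finset.mem_range.1 (Finset.mem_sdiff.1 hk).1
    rw [Finset.mem_Icc]
    omega
  · rw [SSet, Finset.card_image_of_injOn (sdiff_inj t), Finset.card_sdiff_of_subset hP1,
      Finset.card_range, hP2]
    omega

lemma SSet_inj (ht2 : 2 ≤ t) :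
    ∀ P ∈ (range (2 * t - 3)).powersetCard (t - 1),
    ∀ P' ∈ (range (2 * t - 3)).powersetCard (t - 1),
      SSet t P = SSet t P' → P = P' := by
  intro P hP P' hP' h
  obtain ⟨hP1, _⟩ := Finset.mem_powersetCard.1 hP
  obtain ⟨hP1', _⟩ := Finset.mem_powersetCard.1 hP'
  have himg : ∀ Q : Finset ℕ, Q ⊆ range (2 * t - 3) →
      (SSet t Q).image (fun j => 2 * t - 3 - j) = range (2 * t - 3) \ Q := by
    intro Q hQ
    rw [SSet, Finset.image_image]
    have : ∀ k ∈ range (2 * t - 3) \ Q, ((fun j => 2 * t - 3 - j) ∘ fun k => 2 * t - 3 - k) k = id k := by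
      intro k hk
      have := Finset.mem_range.1 (Finset.mem_sdiff.1 hk).1
      simp only [Function.comp_apply, id_eq]
      omega
    rw [Finset.image_congr this, Finset.image_id]
  have hsd : range (2 * t - 3) \ P = range (2 * t - 3) \ P' := by
    rw [← himg P hP1, ← himg P' hP1', h]
  have := congrArg (fun Q => range (2 * t - 3) \ Q) hsd
  simpa [Finset.sdiff_sdiff_eq_self hP1, Finset.sdiff_sdiff_eq_self hP1'] using this

lemma sum_pi_le (ht2 : 2 ≤ t) :
    ∑ P ∈ (range (2 * t - 3)).powersetCard (t - 1),
      ∏ k ∈ range (2 * t - 2), (if k ∈ P then 1 else sz t k)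
    ≤ 2 ^ (sig (2 * t - 3) (t - 2) + 2) := by
  calc ∑ P ∈ (range (2 * t - 3)).powersetCard (t - 1),
      ∏ k ∈ range (2 * t - 2), (if k ∈ P then 1 else sz t k)
      = ∑ P ∈ (range (2 * t - 3)).powersetCard (t - 1), 2 ^ (∑ j ∈ SSet t P, j) :=
        Finset.sum_congr rfl fun P hP => prod_eq_SSet t ht2 hP
    _ = ∑ S ∈ ((range (2 * t - 3)).powersetCard (t - 1)).image (SSet t),
          2 ^ (∑ j ∈ S, j) := by rw [Finset.sum_image (SSet_inj t ht2)]
    _ ≤ ∑ S ∈ (Icc 1 (2 * t - 3)).powersetCard (t - 2), 2 ^ (∑ j ∈ S, j) := by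
        apply Finset.sum_le_sum_of_subset
        intro S hS
        rcases Finset.mem_image.1 hS with ⟨P, hP, rfl⟩
        exact SSet_mem t hP ht2
    _ = F (2 * t - 3) (t - 2) := by rw [F]
    _ ≤ 2 ^ (sig (2 * t - 3) (t - 2) + 2) := F_le _ _

/-! ### The index identity -/

lemma M_id (ht2 : 2 ≤ t) :
    (∑ k ∈ range (2 * t - 2), (2 * t - 3 - k)) = sig (2 * t - 3) (t - 2) + t.choose 2 := by
  have hC : ∑ k ∈ range t, k = t.choose 2 := by
    have h1 := Finset.sum_range_id_mul_two t
    have h2 := Nat.choose_two_right t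
    omega
  have hsplit : ∑ k ∈ range (2 * t - 2), (2 * t - 3 - k)
      = (∑ k ∈ range (t - 2), (2 * t - 3 - k)) + ∑ k ∈ Ico (t - 2) (2 * t - 2), (2 * t - 3 - k) := by
    rw [Finset.range_eq_Ico, ← Finset.sum_Ico_consecutive _ (Nat.zero_le (t - 2)) (by omega : t - 2 ≤ 2 * t - 2), ← Finset.range_eq_Ico]
  have hsecond : ∑ k ∈ Ico (t - 2) (2 * t - 2), (2 * t - 3 - k) = ∑ k ∈ range t, k := by
    rw [Finset.sum_Ico_eq_sum_range]
    have hn : 2 * t - 2 - (t - 2) = t := by omega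
    rw [hn]
    have hcong : ∀ k ∈ range t, 2 * t - 3 - (t - 2 + k) = t - 1 - k := by
      intro k hk
      have := Finset.mem_range.1 hk
      omega
    rw [Finset.sum_congr rfl hcong]
    exact Finset.sum_range_reflect id t
  rw [hsplit, hsecond, hC, sig]

/-! ### The key counting inequality -/

lemma KEY (ht3 : 3 ≤ t) :
    2 ^ (t.choose 2 - 2) * (Dom t).card ≤ t.factorial * (Tr t).card := by
  have hC : 3 ≤ t.choose 2 := by
    calc 3 = Nat.choose 3 2 := by norm_num
      _ ≤ t.choose 2 := Nat.choose_le_choose 2 ht3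
  have ht2 : 2 ≤ t := by omega
  rw [Dom_card, Tr_card, M_id t ht2]
  calc 2 ^ (t.choose 2 - 2) * (t.factorial *
        ∑ P ∈ (range (2 * t - 3)).powersetCard (t - 1),
          ∏ k ∈ range (2 * t - 2), (if k ∈ P then 1 else sz t k))
      = t.factorial * (2 ^ (t.choose 2 - 2) *
          ∑ P ∈ (range (2 * t - 3)).powersetCard (t - 1),
            ∏ k ∈ range (2 * t - 2), (if k ∈ P then 1 else sz t k)) := by ring
    _ ≤ t.factorial * (2 ^ (t.choose 2 - 2) * 2 ^ (sig (2 * t - 3) (t - 2) + 2)) := by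
        exact Nat.mul_le_mul_left _ (Nat.mul_le_mul_left _ (sum_pi_le t ht2))
    _ = t.factorial * 2 ^ (sig (2 * t - 3) (t - 2) + t.choose 2) := by
        rw [← pow_add]
        congr 2
        omega

end Main

end S10

theorem stmt_10 (t : ℕ) (ht : 2 ≤ t)
    (c : Fin (2 ^ (2 * t - 3)) → Fin (2 ^ (2 * t - 3)) → Bool)
    (hsym : ∀ i j, c i j = c j i) :
    ((Finset.univ.filter (fun S : Finset (Fin (2 ^ (2 * t - 3))) =>
        S.card = t ∧ ∃ b, ∀ i ∈ S, ∀ j ∈ S, i ≠ j → c i j = b)).card : ℝ)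
      ≥ (1 / (Nat.factorial t : ℝ)) * (2 : ℝ) ^ ((t.choose 2 : ℤ) - 2) := by
  classical
  rcases eq_or_lt_of_le ht with heq | ht3
  · -- the case t = 2 : any pair of the two vertices is monochromatic
    subst heq
    set FS := Finset.univ.filter (fun S : Finset (Fin (2 ^ (2 * 2 - 3))) =>
        S.card = 2 ∧ ∃ b, ∀ i ∈ S, ∀ j ∈ S, i ≠ j → c i j = b) with hFS
    have ha : (0:ℕ) < 2 ^ (2 * 2 - 3) := by norm_num
    have hb : (1:ℕ) < 2 ^ (2 * 2 - 3) := by norm_num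
    set a : Fin (2 ^ (2 * 2 - 3)) := ⟨0, ha⟩
    set b : Fin (2 ^ (2 * 2 - 3)) := ⟨1, hb⟩
    have hmem : Finset.univ ∈ FS := by
      rw [hFS]
      refine Finset.mem_filter.2 ⟨Finset.mem_univ _, ?_, ?_⟩
      · rw [Finset.card_univ, Fintype.card_fin]
        norm_num
      · refine ⟨c a b, fun i _ j _ hne => ?_⟩
        have hi2 : (i : ℕ) < 2 := by have := i.isLt; omega
        have hj2 : (j : ℕ) < 2 := by have := j.isLt; omega
        have hne' : (i : ℕ) ≠ (j : ℕ) := fun h => hne (Fin.ext h)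
        have hcases : ((i:ℕ) = 0 ∧ (j:ℕ) = 1) ∨ ((i:ℕ) = 1 ∧ (j:ℕ) = 0) := by omega
        rcases hcases with ⟨h1, h2⟩ | ⟨h1, h2⟩
        · have hia : i = a := Fin.ext h1
          have hjb : j = b := Fin.ext h2
          rw [hia, hjb]
        · have hib : i = b := Fin.ext h1
          have hja : j = a := Fin.ext h2
          rw [hib, hja, hsym]
    have hpos : 0 < FS.card := Finset.card_pos.2 ⟨_, hmem⟩
    have h1R : (1:ℝ) ≤ (FS.card : ℝ) := by exact_mod_cast hpos
    have hval : (1 / (Nat.factorial 2 : ℝ)) * (2 : ℝ) ^ ((Nat.choose 2 2 : ℤ) - 2)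
        = 1 / 4 := by
      rw [Nat.choose_self]
      norm_num [Nat.factorial]
    rw [ge_iff_le, hval]
    linarith
  · -- the main case 3 ≤ t
    have ht3' : 3 ≤ t := ht3
    have ht2 : 2 ≤ t := by omega
    set FS := Finset.univ.filter (fun S : Finset (Fin (2 ^ (2 * t - 3))) =>
        S.card = t ∧ ∃ b, ∀ i ∈ S, ∀ j ∈ S, i ≠ j → c i j = b) with hFS
    have hsub : (S10.Tr t).image (S10.Phi t c) ⊆ FS := by
      intro S hS
      rcases Finset.mem_image.1 hS with ⟨x, hx, rfl⟩
      exact Finset.mem_filter.2 ⟨Finset.mem_univ _, S10.Phi_card t c hx ht2,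
        S10.cliq_mono t c _ (S10.xe_lt t hx) hsym⟩
    have h1 : (S10.Tr t).card ≤ (S10.Dom t).card * ((S10.Tr t).image (S10.Phi t c)).card :=
      Finset.card_le_mul_card_image (S10.Tr t) (S10.Dom t).card
        (fun T _ => S10.fiber_le t c T ht2)
    have h2 : ((S10.Tr t).image (S10.Phi t c)).card ≤ FS.card := Finset.card_le_card hsub
    have hKEY := S10.KEY t ht3'
    have hTrpos : 0 < (S10.Tr t).card := by
      rw [S10.Tr_card]
      exact Nat.pow_pos (by norm_num)
    have hDpos : 0 < (S10.Dom t).card := by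
      by_contra h
      push_neg at h
      have h0 : (S10.Dom t).card = 0 := by omega
      rw [h0, zero_mul] at h1
      omega
    have hfinal : 2 ^ (t.choose 2 - 2) ≤ t.factorial * FS.card := by
      have hchain : 2 ^ (t.choose 2 - 2) * (S10.Dom t).card
          ≤ (t.factorial * FS.card) * (S10.Dom t).card := by
        calc 2 ^ (t.choose 2 - 2) * (S10.Dom t).card
            ≤ t.factorial * (S10.Tr t).card := hKEY
          _ ≤ t.factorial * ((S10.Dom t).card * ((S10.Tr t).image (S10.Phi t c)).card) :=
              Nat.mul_le_mul_left _ h1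
          _ ≤ t.factorial * ((S10.Dom t).card * FS.card) :=
              Nat.mul_le_mul_left _ (Nat.mul_le_mul_left _ h2)
          _ = (t.factorial * FS.card) * (S10.Dom t).card := by ring
      exact Nat.le_of_mul_le_mul_right hchain hDpos
    have hcast : ((2:ℝ) ^ ((t.choose 2 : ℤ) - 2)) ≤ ((2 ^ (t.choose 2 - 2) : ℕ) : ℝ) := by
      have he : ((2 ^ (t.choose 2 - 2) : ℕ) : ℝ) = (2:ℝ) ^ (((t.choose 2 - 2 : ℕ) : ℤ)) := by
        push_cast
        rw [zpow_natCast]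
      rw [he]
      apply zpow_le_zpow_right₀ (by norm_num : (1:ℝ) ≤ 2)
      omega
    have hfact : (0:ℝ) < (t.factorial : ℝ) := by exact_mod_cast t.factorial_pos
    rw [ge_iff_le]
    calc (1 / (t.factorial : ℝ)) * (2:ℝ) ^ ((t.choose 2 : ℤ) - 2)
        ≤ (1 / (t.factorial : ℝ)) * ((t.factorial : ℝ) * (FS.card : ℝ)) := by
          apply mul_le_mul_of_nonneg_left _ (by positivity)
          calc (2:ℝ) ^ ((t.choose 2 : ℤ) - 2) ≤ ((2 ^ (t.choose 2 - 2) : ℕ) : ℝ) := hcast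
            _ ≤ ((t.factorial * FS.card : ℕ) : ℝ) := by exact_mod_cast hfinal
            _ = (t.factorial : ℝ) * (FS.card : ℝ) := by push_cast; ring
      _ = (FS.card : ℝ) := by field_simp
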